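/- Let X, Y, Z be random positive definite d×d complex matrices with X ⪯ Y ⪯ Z almost surely, let C be a deterministic positive definite d×d matrix, and let q ≥ 1, with Y^q and Z^q having integrable entries. Then ℙ(Y ⋠ C) ≤ Tr(𝔼[Z^q]·C^{−q}) and ℙ(X ⋠ C) ≤ Tr(𝔼[Y^q]·C^{−q}). -/

import Mathlib

open MeasureTheory
open scoped ComplexOrder

noncomputable section

/-- `d × d` complex matrices: the model for square tensors
`ℂ^{I_1×⋯×I_N×I_1×⋯×I_N}` under the Einstein product, with `d = ∏ I_j`. -/
abbrev Mat (d : ℕ) := Matrix (Fin d) (Fin d) ℂ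

/-- Continuous functional calculus: apply `f : ℝ → ℝ` to the eigenvalues of a
(Hermitian) matrix. -/
noncomputable def mfun {d : ℕ} (f : ℝ → ℝ) (A : Mat d) : Mat d := cfc f A

/-- Real matrix power `A^r` via the continuous functional calculus. -/
noncomputable def mpow {d : ℕ} (A : Mat d) (r : ℝ) : Mat d :=
  cfc (fun x : ℝ => x ^ r) A

/-- The positive semidefinite absolute value `|A| = (A²)^{1/2}` of a Hermitian
matrix, obtained by applying `|·|` to the eigenvalues. -/
noncomputable def matAbs {d : ℕ} (A : Mat d) : Mat d := mfun (fun x => |x|) A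

/-- Largest eigenvalue of a Hermitian matrix (junk value `0` otherwise). -/
noncomputable def eigMax {d : ℕ} (A : Mat d) : ℝ :=
  if h : A.IsHermitian then ⨆ i, h.eigenvalues i else 0

/-- Smallest eigenvalue of a Hermitian matrix (junk value `0` otherwise). -/
noncomputable def eigMin {d : ℕ} (A : Mat d) : ℝ :=
  if h : A.IsHermitian then ⨅ i, h.eigenvalues i else 0

/-- The `i`-th largest eigenvalue (`0`-indexed, so `eigDesc A 0 = λ₁(A)` is the
largest) of a Hermitian matrix; junk value `0` otherwise. -/
noncomputable def eigDesc {d : ℕ} (A : Mat d) (i : ℕ) : ℝ :=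
  if h : i < d ∧ A.IsHermitian then
    (h.2.eigenvalues ∘ Tuple.sort h.2.eigenvalues) (Fin.rev ⟨i, h.1⟩) else 0

/-- Operator perspective `X #_f Y = X^{1/2} · f(X^{-1/2} Y X^{-1/2}) · X^{1/2}`. -/
noncomputable def persp {d : ℕ} (f : ℝ → ℝ) (X Y : Mat d) : Mat d :=
  mpow X (1/2) * mfun f (mpow X (-(1/2)) * Y * mpow X (-(1/2))) * mpow X (1/2)

/-- `TMI¹` : positive continuous functions on `(0,∞)` with `f 1 = 1` that are
tensor (matrix, in dimension `d`) monotone increasing. -/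
def TMI1 (d : ℕ) (f : ℝ → ℝ) : Prop :=
  ContinuousOn f (Set.Ioi 0) ∧ (∀ x > 0, 0 < f x) ∧ f 1 = 1 ∧
    ∀ A B : Mat d, A.PosDef → B.PosDef → (A - B).PosSemidef →
      (mfun f A - mfun f B).PosSemidef

/-- `TMD¹` : positive continuous functions on `(0,∞)` with `h 1 = 1` that are
tensor (matrix, in dimension `d`) monotone decreasing. -/
def TMD1 (d : ℕ) (h : ℝ → ℝ) : Prop :=
  ContinuousOn h (Set.Ioi 0) ∧ (∀ x > 0, 0 < h x) ∧ h 1 = 1 ∧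
    ∀ A B : Mat d, A.PosDef → B.PosDef → (A - B).PosSemidef →
      (mfun h B - mfun h A).PosSemidef

/-- `TC¹` : positive continuous functions on `(0,∞)` with `g 1 = 1` that are
tensor (matrix, in dimension `d`) convex. -/
def TC1 (d : ℕ) (g : ℝ → ℝ) : Prop :=
  ContinuousOn g (Set.Ioi 0) ∧ (∀ x > 0, 0 < g x) ∧ g 1 = 1 ∧
    ∀ A B : Mat d, A.PosDef → B.PosDef → ∀ t : ℝ, 0 ≤ t → t ≤ 1 →
      ((t • mfun g A + (1 - t) • mfun g B) - mfun g (t • A + (1 - t) • B)).PosSemidef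

/-- `Z_j := X^{-2^{j-1}} · Y^{2^j} · X^{-2^{j-1}}` (so `Z_0 = X^{-1/2} Y X^{-1/2}`);
this is `Z_{k-1}` of the paper for `k = j+1`. -/
noncomputable def Zmat {d : ℕ} (X Y : Mat d) (j : ℕ) : Mat d :=
  mpow X (-((2 : ℝ) ^ ((j : ℝ) - 1))) * mpow Y ((2 : ℝ) ^ (j : ℝ)) *
    mpow X (-((2 : ℝ) ^ ((j : ℝ) - 1)))

/-- `Ψ_lower(q,f,X,Y)` for `q = 2ⁿ·q₀`. -/
noncomputable def PsiLower {d : ℕ} (q0 : ℝ) (n : ℕ) (f : ℝ → ℝ) (X Y : Mat d) : ℝ :=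
  eigMin (mpow (mfun f (Zmat X Y n)) (-q0) * mfun f (mpow (Zmat X Y n) q0)) *
    ∏ k ∈ Finset.range n,
      eigMin (mpow (mfun f (Zmat X Y k)) (-2) * mfun f (mpow (Zmat X Y k) 2))

/-- `Ψ_upper(q,f,X,Y)` for `q = 2ⁿ·q₀`. -/
noncomputable def PsiUpper {d : ℕ} (q0 : ℝ) (n : ℕ) (f : ℝ → ℝ) (X Y : Mat d) : ℝ :=
  eigMax (mpow (mfun f (Zmat X Y n)) (-q0) * mfun f (mpow (Zmat X Y n) q0)) *
    ∏ k ∈ Finset.range n,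
      eigMax (mpow (mfun f (Zmat X Y k)) (-2) * mfun f (mpow (Zmat X Y k) 2))

/-- The Kantorovich constant `K(m, M, p)`. -/
noncomputable def Kconst (m M p : ℝ) : ℝ :=
  ((p - 1) * (M ^ p - m ^ p) / (p * (m * M ^ p - M * m ^ p))) ^ p *
    (m * M ^ p - M * m ^ p) / ((p - 1) * (M - m))

/-- The Kantorovich constant, interpreted as `1` when `p = 1` or `m = M`. -/
noncomputable def Kc (m M p : ℝ) : ℝ := if p = 1 ∨ m = M then 1 else Kconst m M p

/-- `ψ(q, f, Z) = max( f(λ_min(Z)^q)/f(λ_min(Z))^q , f(λ_max(Z)^q)/f(λ_max(Z))^q )`. -/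
noncomputable def psiRatio {d : ℕ} (q : ℝ) (f : ℝ → ℝ) (Z : Mat d) : ℝ :=
  max (f (eigMin Z ^ q) / f (eigMin Z) ^ q) (f (eigMax Z ^ q) / f (eigMax Z) ^ q)

/-- Entrywise expectation of a random matrix. -/
noncomputable def Emat {d : ℕ} {Ω : Type*} [MeasurableSpace Ω] (μ : Measure Ω)
    (X : Ω → Mat d) : Mat d := fun i j => ∫ ω, X ω i j ∂μ

open Matrix

namespace LH
variable {d : ℕ}

lemma contOn {A : Mat d} (hA : A.IsHermitian) (f : ℝ → ℝ) :
    ContinuousOn f (spectrum ℝ A) :=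
  Set.Finite.continuousOn A.finite_real_spectrum f

lemma contOn' {A : Mat d} (hA : A.IsHermitian) (f g : ℝ → ℝ) :
    ContinuousOn f (g '' spectrum ℝ A) :=
  Set.Finite.continuousOn ((Matrix.finite_real_spectrum (A := A)).image g) f

/-- quadratic form of `cfc f A` -/
lemma quad {A : Mat d} (hA : A.IsHermitian) (f : ℝ → ℝ) (v : Fin d → ℂ) :
    dotProduct (star v) (cfc f A *ᵥ v) =
      ((∑ i, f (hA.eigenvalues i) *
        Complex.normSq ((star (hA.eigenvectorUnitary : Mat d) *ᵥ v) i) : ℝ) : ℂ) := by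
  rw [hA.cfc_eq]
  unfold Matrix.IsHermitian.cfc
  rw [Unitary.conjStarAlgAut_apply]
  set U : Mat d := (hA.eigenvectorUnitary : Mat d)
  set w : Fin d → ℂ := star U *ᵥ v with hw
  have h1 : (U * Matrix.diagonal (RCLike.ofReal ∘ f ∘ hA.eigenvalues) * star U) *ᵥ v
      = U *ᵥ (Matrix.diagonal (RCLike.ofReal ∘ f ∘ hA.eigenvalues) *ᵥ w) := by
    rw [← Matrix.mulVec_mulVec, ← Matrix.mulVec_mulVec]
  rw [h1]
  have h2 : dotProduct (star v) (U *ᵥ (Matrix.diagonal (RCLike.ofReal ∘ f ∘ hA.eigenvalues) *ᵥ w))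
      = dotProduct (star w) (Matrix.diagonal (RCLike.ofReal ∘ f ∘ hA.eigenvalues) *ᵥ w) := by
    rw [Matrix.dotProduct_mulVec]
    congr 1
    rw [hw, Matrix.star_mulVec, Matrix.star_eq_conjTranspose, Matrix.conjTranspose_conjTranspose]
  rw [h2]
  simp only [dotProduct, Matrix.mulVec_diagonal, Function.comp_apply, Pi.star_apply]
  push_cast
  refine Finset.sum_congr rfl fun i _ => ?_
  have hco : (RCLike.ofReal (f (hA.eigenvalues i)) : ℂ) = ((f (hA.eigenvalues i) : ℝ) : ℂ) := rfl
  have hns : ((Complex.normSq (w i) : ℝ) : ℂ) = (starRingEnd ℂ) (w i) * w i :=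
    Complex.normSq_eq_conj_mul_self ▸ rfl
  rw [hco, hns, RCLike.star_def]; ring

lemma cfc_isHermitian (f : ℝ → ℝ) (A : Mat d) : (cfc f A).IsHermitian := by
  have : IsSelfAdjoint (cfc f A) := cfc_predicate f A
  exact this

lemma cfc_posSemidef {A : Mat d} (hA : A.IsHermitian) {f : ℝ → ℝ}
    (hf : ∀ i, 0 ≤ f (hA.eigenvalues i)) : (cfc f A).PosSemidef := by
  refine Matrix.PosSemidef.of_dotProduct_mulVec_nonneg (cfc_isHermitian f A) fun v => ?_
  rw [quad hA f v, Complex.zero_le_real]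
  exact Finset.sum_nonneg fun i _ => mul_nonneg (hf i) (Complex.normSq_nonneg _)

lemma cfc_posDef {A : Mat d} (hA : A.IsHermitian) {f : ℝ → ℝ}
    (hf : ∀ i, 0 < f (hA.eigenvalues i)) : (cfc f A).PosDef := by
  refine Matrix.PosDef.of_dotProduct_mulVec_pos (cfc_isHermitian f A) fun v hv => ?_
  rw [quad hA f v, Complex.zero_lt_real]
  set U : Mat d := (hA.eigenvectorUnitary : Mat d)
  have hUw : U *ᵥ (star U *ᵥ v) = v := by
    rw [Matrix.mulVec_mulVec, (Matrix.mem_unitaryGroup_iff).mp hA.eigenvectorUnitary.2,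
      Matrix.one_mulVec]
  have hw : star U *ᵥ v ≠ 0 := by
    intro h; apply hv; rw [← hUw, h, Matrix.mulVec_zero]
  obtain ⟨i, hi⟩ := Function.ne_iff.mp hw
  refine Finset.sum_pos' (fun j _ => mul_nonneg (hf j).le (Complex.normSq_nonneg _)) ⟨i, Finset.mem_univ i, ?_⟩
  exact mul_pos (hf i) (by simpa [Complex.normSq_pos] using hi)

end LH

namespace LH
variable {d : ℕ}
open Matrix

lemma spec_pos {A : Mat d} (hA : A.PosDef) : ∀ x ∈ spectrum ℝ A, 0 < x := by
  rw [hA.1.spectrum_real_eq_range_eigenvalues]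
  rintro x ⟨i, rfl⟩
  exact hA.eigenvalues_pos i

lemma mpow_isHermitian (A : Mat d) (r : ℝ) : (mpow A r).IsHermitian :=
  cfc_isHermitian _ A

lemma mpow_posDef {A : Mat d} (hA : A.PosDef) (r : ℝ) : (mpow A r).PosDef :=
  cfc_posDef hA.1 fun i => Real.rpow_pos_of_pos (hA.eigenvalues_pos i) r

lemma mpow_mul {A : Mat d} (hA : A.PosDef) (a b : ℝ) :
    mpow A a * mpow A b = mpow A (a + b) := by
  unfold mpow
  rw [← cfc_mul _ _ A (contOn hA.1 _) (contOn hA.1 _)]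
  exact cfc_congr fun x hx => (Real.rpow_add (spec_pos hA x hx) a b).symm

lemma mpow_zero {A : Mat d} (hA : A.IsHermitian) : mpow A 0 = 1 := by
  unfold mpow
  rw [cfc_congr (g := fun _ => (1:ℝ)) fun x _ => Real.rpow_zero x]
  exact cfc_const_one ℝ A hA

lemma mpow_one {A : Mat d} (hA : A.PosDef) : mpow A 1 = A := by
  unfold mpow
  rw [cfc_congr (g := id) fun x _ => Real.rpow_one x]
  exact cfc_id ℝ A hA.1

lemma mpow_mpow {A : Mat d} (hA : A.PosDef) (a b : ℝ) :
    mpow (mpow A a) b = mpow A (a * b) := by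
  unfold mpow
  have h : cfc (fun x : ℝ => (x ^ a) ^ b) A = cfc (fun x : ℝ => x ^ b) (cfc (fun x : ℝ => x ^ a) A) :=
    cfc_comp' (fun x : ℝ => x ^ b) (fun x : ℝ => x ^ a) A (contOn' hA.1 _ _) (contOn hA.1 _) hA.1
  rw [← h]
  exact cfc_congr fun x hx => by
    rw [← Real.rpow_mul (spec_pos hA x hx).le]

lemma inv_mul {X : Mat d} (hX : X.PosDef) : cfc (fun x : ℝ => x⁻¹) X * X = 1 := by
  have hid : cfc (id : ℝ → ℝ) X = X := cfc_id ℝ X hX.1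
  have hm : cfc (fun x : ℝ => x⁻¹ * id x) X = cfc (fun x : ℝ => x⁻¹) X * cfc (id : ℝ → ℝ) X :=
    cfc_mul _ _ X (contOn hX.1 _) (contOn hX.1 _)
  have h1 : cfc (fun _ : ℝ => (1:ℝ)) X = 1 := cfc_const_one ℝ X hX.1
  calc cfc (fun x : ℝ => x⁻¹) X * X
      = cfc (fun x : ℝ => x⁻¹) X * cfc (id : ℝ → ℝ) X := by rw [hid]
    _ = cfc (fun x : ℝ => x⁻¹ * id x) X := hm.symm
    _ = cfc (fun _ : ℝ => (1:ℝ)) X :=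
        cfc_congr fun x hx => inv_mul_cancel₀ (spec_pos hX x hx).ne'
    _ = 1 := h1

lemma mul_inv {X : Mat d} (hX : X.PosDef) : X * cfc (fun x : ℝ => x⁻¹) X = 1 := by
  have hid : cfc (id : ℝ → ℝ) X = X := cfc_id ℝ X hX.1
  have hm : cfc (fun x : ℝ => id x * x⁻¹) X = cfc (id : ℝ → ℝ) X * cfc (fun x : ℝ => x⁻¹) X :=
    cfc_mul _ _ X (contOn hX.1 _) (contOn hX.1 _)
  have h1 : cfc (fun _ : ℝ => (1:ℝ)) X = 1 := cfc_const_one ℝ X hX.1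
  calc X * cfc (fun x : ℝ => x⁻¹) X
      = cfc (id : ℝ → ℝ) X * cfc (fun x : ℝ => x⁻¹) X := by rw [hid]
    _ = cfc (fun x : ℝ => id x * x⁻¹) X := hm.symm
    _ = cfc (fun _ : ℝ => (1:ℝ)) X :=
        cfc_congr fun x hx => mul_inv_cancel₀ (spec_pos hX x hx).ne'
    _ = 1 := h1

lemma eig_le_one {M : Mat d} (hM : M.IsHermitian) (h1 : (1 - M).PosSemidef) (i : Fin d) :
    hM.eigenvalues i ≤ 1 := by
  set U : Mat d := (hM.eigenvectorUnitary : Mat d) with hU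
  set v : Fin d → ℂ := U *ᵥ Pi.single i 1 with hv
  have hw : star U *ᵥ v = Pi.single i 1 := by
    rw [hv, Matrix.mulVec_mulVec]
    rw [show star U * U = 1 from Unitary.coe_star_mul_self hM.eigenvectorUnitary]
    rw [Matrix.one_mulVec]
  have hsum : ∀ f : ℝ → ℝ,
      (∑ j, f (hM.eigenvalues j) * Complex.normSq ((star U *ᵥ v) j) : ℝ) = f (hM.eigenvalues i) := by
    intro f
    rw [hw]
    rw [Finset.sum_eq_single i]
    · simp
    · intro j _ hj; simp [Pi.single_apply, hj]
    · simp
  have hid : cfc (id : ℝ → ℝ) M = M := cfc_id ℝ M hM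
  have hone : cfc (fun _ : ℝ => (1:ℝ)) M = 1 := cfc_const_one ℝ M hM
  have hqM : star v ⬝ᵥ (M *ᵥ v) = ((hM.eigenvalues i : ℝ) : ℂ) := by
    have := quad hM id v
    rw [hid] at this
    rw [this, hsum id]
    rfl
  have hq1 : star v ⬝ᵥ ((1 : Mat d) *ᵥ v) = ((1 : ℝ) : ℂ) := by
    have := quad hM (fun _ => 1) v
    rw [hone] at this
    rw [this, hsum (fun _ => 1)]
  have h2 := h1.dotProduct_mulVec_nonneg v
  rw [Matrix.sub_mulVec, dotProduct_sub, hqM, hq1, ← Complex.ofReal_sub,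
    Complex.zero_le_real] at h2
  linarith

lemma posDef_conj {X : Mat d} (hX : X.PosDef) {S T : Mat d} (hS : S.IsHermitian)
    (hTS : T * S = 1) : (S * X * S).PosDef := by
  have h1 : S * X * S = Sᴴ * X * S := by rw [hS.eq]
  refine Matrix.PosDef.of_dotProduct_mulVec_pos ?_ ?_
  · rw [h1]; exact Matrix.isHermitian_conjTranspose_mul_mul S hX.1
  · intro v hv
    have hSv : S *ᵥ v ≠ 0 := by
      intro h
      apply hv
      have hv' : T *ᵥ (S *ᵥ v) = v := by
        rw [Matrix.mulVec_mulVec, hTS, Matrix.one_mulVec]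
      rw [← hv', h, Matrix.mulVec_zero]
    have := hX.dotProduct_mulVec_pos hSv
    rw [h1]
    simpa only [Matrix.star_mulVec, Matrix.dotProduct_mulVec, Matrix.vecMul_vecMul] using this

lemma psd_smul {M : Mat d} (hM : M.PosSemidef) {r : ℝ} (hr : 0 ≤ r) :
    (r • M).PosSemidef := by
  refine Matrix.PosSemidef.of_dotProduct_mulVec_nonneg ?_ ?_
  · show (r • M)ᴴ = r • M
    ext i j
    simp only [Matrix.conjTranspose_apply, Matrix.smul_apply, star_smul, star_trivial]
    rw [hM.1.apply]
  · intro v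
    rw [Matrix.smul_mulVec, dotProduct_smul]
    have : (r • (star v ⬝ᵥ M *ᵥ v) : ℂ) = (r : ℂ) * (star v ⬝ᵥ M *ᵥ v) := by
      rw [Complex.real_smul]
    rw [this]
    exact mul_nonneg (by exact_mod_cast Complex.zero_le_real.mpr hr) (hM.dotProduct_mulVec_nonneg v)

end LH

namespace LH
variable {d : ℕ}
open Matrix

lemma inv_anti {X Y : Mat d} (hX : X.PosDef) (hY : Y.PosDef) (hXY : (Y - X).PosSemidef) :
    (cfc (fun x : ℝ => x⁻¹) X - cfc (fun x : ℝ => x⁻¹) Y).PosSemidef := by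
  have h2 : (1/2 : ℝ) + -(1/2) = 0 := by norm_num
  have h2' : (-(1/2) : ℝ) + (1/2) = 0 := by norm_num
  have hTS : mpow Y (1/2) * mpow Y (-(1/2)) = 1 := by
    rw [mpow_mul hY, h2, mpow_zero hY.1]
  have hST : mpow Y (-(1/2)) * mpow Y (1/2) = 1 := by
    rw [mpow_mul hY, h2', mpow_zero hY.1]
  have hShe : (mpow Y (-(1/2))).IsHermitian := mpow_isHermitian Y _
  have hSY : mpow Y (-(1/2)) * Y = mpow Y (1/2) := by
    nth_rewrite 2 [← mpow_one hY]
    rw [mpow_mul hY]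
    norm_num
  set M : Mat d := mpow Y (-(1/2)) * X * mpow Y (-(1/2)) with hMdef
  have hMpd : M.PosDef := posDef_conj hX hShe hTS
  have hSYS : mpow Y (-(1/2)) * Y * mpow Y (-(1/2)) = 1 := by rw [hSY, hTS]
  have hIM : ((1 : Mat d) - M).PosSemidef := by
    have hconj := hXY.conjTranspose_mul_mul_same (mpow Y (-(1/2)))
    rw [hShe.eq, Matrix.mul_sub, Matrix.sub_mul, hSYS] at hconj
    exact hconj
  have hinv1 : (cfc (fun x : ℝ => x⁻¹) M - 1).PosSemidef := by
    have hsub : cfc (fun x : ℝ => x⁻¹ - 1) M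
        = cfc (fun x : ℝ => x⁻¹) M - cfc (fun _ : ℝ => (1:ℝ)) M :=
      cfc_sub _ _ M (contOn hMpd.1 _) (contOn hMpd.1 _)
    have hone : cfc (fun _ : ℝ => (1:ℝ)) M = 1 := cfc_const_one ℝ M hMpd.1
    have hpsd := cfc_posSemidef hMpd.1 (f := fun x => x⁻¹ - 1) (fun i => by
      have ha := hMpd.eigenvalues_pos i
      have hb := eig_le_one hMpd.1 hIM i
      have : (1:ℝ) ≤ (hMpd.1.eigenvalues i)⁻¹ := (one_le_inv₀ ha).mpr hb
      linarith)
    rwa [hsub, hone] at hpsd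
  have hXinv_mul : cfc (fun x : ℝ => x⁻¹) X * X = 1 := inv_mul hX
  have hMinv : M * cfc (fun x : ℝ => x⁻¹) M = 1 := mul_inv hMpd
  have key : mpow Y (1/2) * cfc (fun x : ℝ => x⁻¹) X * mpow Y (1/2)
      = cfc (fun x : ℝ => x⁻¹) M := by
    refine left_inv_eq_right_inv ?_ hMinv
    rw [hMdef]
    have e1 : mpow Y (1/2) * cfc (fun x : ℝ => x⁻¹) X * mpow Y (1/2)
        * (mpow Y (-(1/2)) * X * mpow Y (-(1/2)))
        = mpow Y (1/2) * (cfc (fun x : ℝ => x⁻¹) X *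
            ((mpow Y (1/2) * mpow Y (-(1/2))) * (X * mpow Y (-(1/2))))) := by
      simp only [Matrix.mul_assoc]
    rw [e1, hTS, Matrix.one_mul, ← Matrix.mul_assoc (cfc (fun x : ℝ => x⁻¹) X) X,
      hXinv_mul, Matrix.one_mul, hTS]
  have hXinv : cfc (fun x : ℝ => x⁻¹) X
      = mpow Y (-(1/2)) * cfc (fun x : ℝ => x⁻¹) M * mpow Y (-(1/2)) := by
    rw [← key]
    have e2 : mpow Y (-(1/2)) * (mpow Y (1/2) * cfc (fun x : ℝ => x⁻¹) X * mpow Y (1/2))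
        * mpow Y (-(1/2))
        = (mpow Y (-(1/2)) * mpow Y (1/2)) * (cfc (fun x : ℝ => x⁻¹) X *
            (mpow Y (1/2) * mpow Y (-(1/2)))) := by
      simp only [Matrix.mul_assoc]
    rw [e2, hST, hTS, Matrix.one_mul, Matrix.mul_one]
  have hYinv : cfc (fun x : ℝ => x⁻¹) Y = mpow Y (-(1/2)) * 1 * mpow Y (-(1/2)) := by
    rw [Matrix.mul_one, mpow_mul hY]
    have hn : (-(1/2) : ℝ) + -(1/2) = -1 := by norm_num
    rw [hn]
    unfold mpow
    exact cfc_congr fun x hx => (Real.rpow_neg_one x).symm ▸ rfl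
  have hfin : cfc (fun x : ℝ => x⁻¹) X - cfc (fun x : ℝ => x⁻¹) Y
      = mpow Y (-(1/2)) * (cfc (fun x : ℝ => x⁻¹) M - 1) * mpow Y (-(1/2)) := by
    rw [hXinv, hYinv, Matrix.mul_sub, Matrix.sub_mul]
  rw [hfin]
  have hres := hinv1.conjTranspose_mul_mul_same (mpow Y (-(1/2)))
  rwa [hShe.eq] at hres

lemma resolvent {A B : Mat d} (hA : A.PosDef) (hB : B.PosDef) (hAB : (B - A).PosSemidef)
    {lam : ℝ} (hlam : 0 < lam) :
    (cfc (fun x : ℝ => x / (x + lam)) B - cfc (fun x : ℝ => x / (x + lam)) A).PosSemidef := by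
  have hmain : ∀ (X : Mat d), X.PosDef →
      cfc (fun x : ℝ => x / (x + lam)) X
        = 1 - lam • cfc (fun x : ℝ => x⁻¹) (X + algebraMap ℝ (Mat d) lam) := by
    intro X hX
    have hshift : cfc (fun x : ℝ => x + lam) X = X + algebraMap ℝ (Mat d) lam := by
      have hadd : cfc (fun x : ℝ => id x + lam) X
          = cfc (id : ℝ → ℝ) X + cfc (fun _ : ℝ => lam) X :=
        cfc_add X _ _ (contOn hX.1 _) (contOn hX.1 _)
      have hid : cfc (id : ℝ → ℝ) X = X := cfc_id ℝ X hX.1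
      have hc : cfc (fun _ : ℝ => lam) X = algebraMap ℝ (Mat d) lam := cfc_const lam X hX.1
      calc cfc (fun x : ℝ => x + lam) X
          = cfc (id : ℝ → ℝ) X + cfc (fun _ : ℝ => lam) X := hadd
        _ = X + algebraMap ℝ (Mat d) lam := by rw [hid, hc]
    have hcomp : cfc (fun x : ℝ => ((fun y : ℝ => y + lam) x)⁻¹) X
        = cfc (fun y : ℝ => y⁻¹) (cfc (fun y : ℝ => y + lam) X) :=
      cfc_comp' (fun y : ℝ => y⁻¹) (fun y : ℝ => y + lam) X (contOn' hX.1 _ _) (contOn hX.1 _) hX.1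
    have hsmul : cfc (fun x : ℝ => lam • (x + lam)⁻¹) X
        = lam • cfc (fun x : ℝ => (x + lam)⁻¹) X :=
      cfc_smul lam _ X (contOn hX.1 _)
    have hsub : cfc (fun x : ℝ => 1 - lam • (x + lam)⁻¹) X
        = cfc (fun _ : ℝ => (1:ℝ)) X - cfc (fun x : ℝ => lam • (x + lam)⁻¹) X :=
      cfc_sub _ _ X (contOn hX.1 _) (contOn hX.1 _)
    have hone : cfc (fun _ : ℝ => (1:ℝ)) X = 1 := cfc_const_one ℝ X hX.1
    have hcongr : cfc (fun x : ℝ => x / (x + lam)) X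
        = cfc (fun x : ℝ => 1 - lam • (x + lam)⁻¹) X := by
      refine cfc_congr fun x hx => ?_
      have hxpos := spec_pos hX x hx
      have hne : x + lam ≠ 0 := by positivity
      field_simp
      rw [smul_eq_mul, mul_sub, mul_one, one_div, mul_left_comm, mul_inv_cancel₀ hne, mul_one]; ring
    rw [hcongr, hsub, hone, hsmul, hcomp, hshift]
  have hApd : (A + algebraMap ℝ (Mat d) lam).PosDef := by
    rw [Algebra.algebraMap_eq_smul_one]
    exact hA.add_posSemidef (psd_smul Matrix.PosSemidef.one hlam.le)
  have hBpd : (B + algebraMap ℝ (Mat d) lam).PosDef := by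
    rw [Algebra.algebraMap_eq_smul_one]
    exact hB.add_posSemidef (psd_smul Matrix.PosSemidef.one hlam.le)
  have hdiff : ((B + algebraMap ℝ (Mat d) lam) - (A + algebraMap ℝ (Mat d) lam)).PosSemidef := by
    simpa using hAB
  have hanti := inv_anti hApd hBpd hdiff
  rw [hmain A hA, hmain B hB]
  have e : (1 - lam • cfc (fun x : ℝ => x⁻¹) (B + algebraMap ℝ (Mat d) lam))
      - (1 - lam • cfc (fun x : ℝ => x⁻¹) (A + algebraMap ℝ (Mat d) lam))
      = lam • (cfc (fun x : ℝ => x⁻¹) (A + algebraMap ℝ (Mat d) lam)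
          - cfc (fun x : ℝ => x⁻¹) (B + algebraMap ℝ (Mat d) lam)) := by
    rw [smul_sub]; abel
  rw [e]
  exact psd_smul hanti hlam.le

end LH

namespace LH
variable {d : ℕ}
open Matrix Set

lemma cont_res {x : ℝ} (hx : 0 < x) (r : ℝ) :
    ContinuousOn (fun lam : ℝ => lam ^ (r-1) * (x / (x + lam))) (Set.Ioi 0) := by
  apply ContinuousOn.mul
  · exact fun lam hlam => (Real.continuousAt_rpow_const lam (r-1)
      (Or.inl (ne_of_gt hlam))).continuousWithinAt
  · apply ContinuousOn.div continuousOn_const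
      ((continuous_const.add continuous_id).continuousOn)
    intro lam hlam
    have : (0:ℝ) < lam := hlam
    show x + lam ≠ 0
    positivity

lemma integrable_res {r x : ℝ} (hr0 : 0 < r) (hr1 : r < 1) (hx : 0 < x) :
    MeasureTheory.IntegrableOn (fun lam : ℝ => lam ^ (r-1) * (x / (x + lam)))
      (Set.Ioi (0:ℝ)) := by
  have hcont := cont_res hx r
  have hsplit : Set.Ioc (0:ℝ) 1 ∪ Set.Ioi (1:ℝ) = Set.Ioi (0:ℝ) :=
    Set.Ioc_union_Ioi_eq_Ioi zero_le_one
  rw [← hsplit]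
  apply MeasureTheory.IntegrableOn.union
  · -- on Ioc 0 1, dominated by lam ^ (r-1)
    have hg : MeasureTheory.IntegrableOn (fun lam : ℝ => lam ^ (r-1)) (Set.Ioc (0:ℝ) 1) := by
      have := intervalIntegral.intervalIntegrable_rpow' (a := 0) (b := 1)
        (show (-1:ℝ) < r - 1 by linarith)
      rwa [intervalIntegrable_iff_integrableOn_Ioc_of_le zero_le_one] at this
    refine MeasureTheory.Integrable.mono hg
      ((hcont.mono (Set.Ioc_subset_Ioi_self)).aestronglyMeasurable measurableSet_Ioc) ?_
    filter_upwards [MeasureTheory.ae_restrict_mem measurableSet_Ioc] with lam hlam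
    have h0 : (0:ℝ) < lam := hlam.1
    have hfrac0 : 0 ≤ x / (x + lam) := by positivity
    have hfrac1 : x / (x + lam) ≤ 1 := by
      rw [div_le_one (by positivity)]; linarith
    rw [Real.norm_eq_abs, Real.norm_eq_abs, abs_of_nonneg (by positivity),
      abs_of_nonneg (Real.rpow_nonneg h0.le _)]
    calc lam ^ (r-1) * (x / (x + lam)) ≤ lam ^ (r-1) * 1 :=
          mul_le_mul_of_nonneg_left hfrac1 (Real.rpow_nonneg h0.le _)
      _ = lam ^ (r-1) := mul_one _
  · -- on Ioi 1, dominated by x * lam ^ (r-2)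
    have hg : MeasureTheory.IntegrableOn (fun lam : ℝ => x * lam ^ (r-2)) (Set.Ioi (1:ℝ)) :=
      (integrableOn_Ioi_rpow_of_lt (show r - 2 < -1 by linarith) one_pos).const_mul x
    refine MeasureTheory.Integrable.mono hg
      ((hcont.mono (Set.Ioi_subset_Ioi zero_le_one)).aestronglyMeasurable
        measurableSet_Ioi) ?_
    filter_upwards [MeasureTheory.ae_restrict_mem measurableSet_Ioi] with lam hlam
    have h1 : (1:ℝ) < lam := hlam
    have h0 : (0:ℝ) < lam := lt_trans one_pos h1
    have hb : x / (x + lam) ≤ x / lam :=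
      div_le_div_of_nonneg_left hx.le h0 (by linarith)
    rw [Real.norm_eq_abs, Real.norm_eq_abs, abs_of_nonneg (by positivity),
      abs_of_nonneg (by positivity)]
    calc lam ^ (r-1) * (x / (x + lam)) ≤ lam ^ (r-1) * (x / lam) :=
          mul_le_mul_of_nonneg_left hb (Real.rpow_nonneg h0.le _)
      _ = x * lam ^ (r-2) := by
          rw [div_eq_mul_inv, ← Real.rpow_neg_one lam]
          rw [show lam ^ (r-1) * (x * lam ^ (-1:ℝ)) = x * (lam ^ (r-1) * lam ^ (-1:ℝ)) by ring,
            ← Real.rpow_add h0, show r - 1 + (-1:ℝ) = r - 2 by ring]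

lemma subst_int {r x : ℝ} (hx : 0 < x) :
    ∫ lam in Set.Ioi (0:ℝ), lam ^ (r-1) * (x / (x + lam))
      = x ^ r * ∫ u in Set.Ioi (0:ℝ), u ^ (r-1) * (1 / (1 + u)) := by
  have h := MeasureTheory.integral_comp_mul_left_Ioi
      (fun lam : ℝ => lam ^ (r-1) * (x / (x + lam))) 0 hx
  rw [mul_zero] at h
  have heq : ∫ u in Set.Ioi (0:ℝ), (x * u) ^ (r-1) * (x / (x + x * u))
      = x ^ (r-1) * ∫ u in Set.Ioi (0:ℝ), u ^ (r-1) * (1 / (1 + u)) := by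
    rw [← MeasureTheory.integral_const_mul]
    refine MeasureTheory.setIntegral_congr_fun measurableSet_Ioi fun u hu => ?_
    have hu0 : (0:ℝ) < u := hu
    have h1u : (0:ℝ) < 1 + u := by positivity
    rw [Real.mul_rpow hx.le hu0.le]
    have hden : x + x * u = x * (1 + u) := by ring
    rw [hden]
    field_simp
  rw [heq] at h
  rw [smul_eq_mul] at h
  have hxr : x ^ r = x * x ^ (r - 1) := by
    have h2 := Real.rpow_add hx 1 (r-1)
    rw [Real.rpow_one] at h2
    rw [show (1:ℝ) + (r-1) = r by ring] at h2
    exact h2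
  have := congrArg (fun z => x * z) h
  simp only [← mul_assoc, mul_inv_cancel₀ hx.ne', one_mul] at this
  rw [← this, hxr]
  try ring

lemma J1_pos {r : ℝ} (hr0 : 0 < r) (hr1 : r < 1) :
    0 < ∫ u in Set.Ioi (0:ℝ), u ^ (r-1) * (1 / (1 + u)) := by
  have hint : MeasureTheory.IntegrableOn (fun u : ℝ => u ^ (r-1) * (1 / (1 + u)))
      (Set.Ioi (0:ℝ)) := integrable_res hr0 hr1 one_pos
  rw [MeasureTheory.setIntegral_pos_iff_support_of_nonneg_ae ?_ hint]
  · have hsub : Set.Ioi (0:ℝ) ⊆ Function.support (fun u : ℝ => u ^ (r-1) * (1 / (1 + u))) := by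
      intro u hu
      have hu0 : (0:ℝ) < u := hu
      have : 0 < u ^ (r-1) * (1 / (1 + u)) := by positivity
      exact this.ne'
    calc (0:ENNReal) < MeasureTheory.volume (Set.Ioi (0:ℝ)) := by
          rw [Real.volume_Ioi]; exact ENNReal.zero_lt_top
      _ ≤ MeasureTheory.volume (Function.support (fun u : ℝ => u ^ (r-1) * (1 / (1 + u)))
            ∩ Set.Ioi (0:ℝ)) :=
          measure_mono fun u hu => ⟨hsub hu, hu⟩
  · filter_upwards [MeasureTheory.ae_restrict_mem measurableSet_Ioi] with u hu
    have hu0 : (0:ℝ) < u := hu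
    positivity

lemma rpow_eq_integral {r x : ℝ} (hr0 : 0 < r) (hr1 : r < 1) (hx : 0 < x) :
    x ^ r = (∫ u in Set.Ioi (0:ℝ), u ^ (r-1) * (1 / (1 + u)))⁻¹
      * ∫ lam in Set.Ioi (0:ℝ), lam ^ (r-1) * (x / (x + lam)) := by
  rw [subst_int hx, mul_comm (x ^ r), ← mul_assoc, inv_mul_cancel₀ (J1_pos hr0 hr1).ne', one_mul]

end LH

namespace LH
variable {d : ℕ}
open Matrix Set

lemma lh {A B : Mat d} (hA : A.PosDef) (hB : B.PosDef) (hAB : (B - A).PosSemidef)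
    {r : ℝ} (hr0 : 0 < r) (hr1 : r ≤ 1) : (mpow B r - mpow A r).PosSemidef := by
  rcases eq_or_lt_of_le hr1 with rfl | hr1'
  · rw [mpow_one hA, mpow_one hB]; exact hAB
  refine Matrix.PosSemidef.of_dotProduct_mulVec_nonneg ((mpow_isHermitian B r).sub (mpow_isHermitian A r)) fun v => ?_
  unfold mpow
  rw [Matrix.sub_mulVec, dotProduct_sub]
  rw [quad hA.1 (fun x : ℝ => x ^ r) v, quad hB.1 (fun x : ℝ => x ^ r) v,
    ← Complex.ofReal_sub, Complex.zero_le_real, sub_nonneg]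
  have hrep : ∀ (X : Mat d) (hX : X.PosDef),
      (∑ i, (hX.1.eigenvalues i) ^ r *
          Complex.normSq ((star (hX.1.eigenvectorUnitary : Mat d) *ᵥ v) i) : ℝ)
      = (∫ u in Set.Ioi (0:ℝ), u ^ (r-1) * (1 / (1 + u)))⁻¹ *
        ∫ lam in Set.Ioi (0:ℝ), ∑ i, lam ^ (r-1) *
          ((hX.1.eigenvalues i) / (hX.1.eigenvalues i + lam)) *
          Complex.normSq ((star (hX.1.eigenvectorUnitary : Mat d) *ᵥ v) i) := by
    intro X hX
    have hint : ∀ i : Fin d, MeasureTheory.IntegrableOn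
        (fun lam : ℝ => lam ^ (r-1) * ((hX.1.eigenvalues i) / (hX.1.eigenvalues i + lam))
          * Complex.normSq ((star (hX.1.eigenvectorUnitary : Mat d) *ᵥ v) i))
        (Set.Ioi (0:ℝ)) :=
      fun i => (integrable_res hr0 hr1' (hX.eigenvalues_pos i)).mul_const _
    rw [MeasureTheory.integral_finset_sum _ (fun i _ => hint i), Finset.mul_sum]
    refine Finset.sum_congr rfl fun i _ => ?_
    rw [rpow_eq_integral hr0 hr1' (hX.eigenvalues_pos i), mul_assoc]
    congr 1
    rw [MeasureTheory.integral_mul_const]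
  rw [hrep A hA, hrep B hB]
  have hintsum : ∀ (X : Mat d) (hX : X.PosDef), MeasureTheory.IntegrableOn
      (fun lam : ℝ => ∑ i, lam ^ (r-1) *
        ((hX.1.eigenvalues i) / (hX.1.eigenvalues i + lam)) *
        Complex.normSq ((star (hX.1.eigenvectorUnitary : Mat d) *ᵥ v) i))
      (Set.Ioi (0:ℝ)) := fun X hX =>
    MeasureTheory.integrable_finset_sum _ fun i _ =>
      (integrable_res hr0 hr1' (hX.eigenvalues_pos i)).mul_const _
  refine mul_le_mul_of_nonneg_left ?_ (inv_nonneg.mpr (J1_pos hr0 hr1').le)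
  refine MeasureTheory.setIntegral_mono_on (hintsum A hA) (hintsum B hB) measurableSet_Ioi ?_
  intro lam hlam
  have hlam0 : (0:ℝ) < lam := hlam
  have hres := resolvent hA hB hAB hlam0
  have h0 := hres.dotProduct_mulVec_nonneg v
  rw [Matrix.sub_mulVec, dotProduct_sub,
    quad hA.1 (fun x : ℝ => x / (x + lam)) v, quad hB.1 (fun x : ℝ => x / (x + lam)) v,
    ← Complex.ofReal_sub, Complex.zero_le_real, sub_nonneg] at h0
  calc (∑ i, lam ^ (r-1) * ((hA.1.eigenvalues i) / (hA.1.eigenvalues i + lam)) *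
          Complex.normSq ((star (hA.1.eigenvectorUnitary : Mat d) *ᵥ v) i) : ℝ)
      = lam ^ (r-1) * ∑ i, ((hA.1.eigenvalues i) / (hA.1.eigenvalues i + lam)) *
          Complex.normSq ((star (hA.1.eigenvectorUnitary : Mat d) *ᵥ v) i) := by
        rw [Finset.mul_sum]; exact Finset.sum_congr rfl fun i _ => by ring
    _ ≤ lam ^ (r-1) * ∑ i, ((hB.1.eigenvalues i) / (hB.1.eigenvalues i + lam)) *
          Complex.normSq ((star (hB.1.eigenvectorUnitary : Mat d) *ᵥ v) i) :=
        mul_le_mul_of_nonneg_left h0 (Real.rpow_nonneg hlam0.le _)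
    _ = ∑ i, lam ^ (r-1) * ((hB.1.eigenvalues i) / (hB.1.eigenvalues i + lam)) *
          Complex.normSq ((star (hB.1.eigenvectorUnitary : Mat d) *ᵥ v) i) := by
        rw [Finset.mul_sum]; exact Finset.sum_congr rfl fun i _ => by ring

end LH

namespace LH
variable {d : ℕ}
open Matrix

lemma trace_eq_sum_eig {T : Mat d} (hT : T.IsHermitian) :
    Matrix.trace T = ((∑ i, hT.eigenvalues i : ℝ) : ℂ) := by
  conv_lhs => rw [hT.spectral_theorem]
  rw [Unitary.conjStarAlgAut_apply, Matrix.trace_mul_cycle,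
    show (star (hT.eigenvectorUnitary : Mat d)) * (hT.eigenvectorUnitary : Mat d) = 1 from
      Unitary.coe_star_mul_self _,
    Matrix.one_mul, Matrix.trace_diagonal]
  push_cast
  rfl

lemma le_trace_smul_one {T : Mat d} (hT : T.PosSemidef) :
    (((Matrix.trace T).re) • (1 : Mat d) - T).PosSemidef := by
  set t := (Matrix.trace T).re with htdef
  have htr : t = ∑ i, hT.1.eigenvalues i := by
    rw [htdef, trace_eq_sum_eig hT.1, Complex.ofReal_re]
  have hpsd := cfc_posSemidef hT.1 (f := fun x => t - x) (fun i => by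
    have hnn := hT.eigenvalues_nonneg
    have hle : hT.1.eigenvalues i ≤ t := by
      rw [htr]
      exact Finset.single_le_sum (fun j _ => hnn j) (Finset.mem_univ i)
    exact sub_nonneg.mpr hle)
  have hsub : cfc (fun x : ℝ => t - id x) T
      = cfc (fun _ : ℝ => t) T - cfc (id : ℝ → ℝ) T :=
    cfc_sub _ _ T (contOn hT.1 _) (contOn hT.1 _)
  have hc : cfc (fun _ : ℝ => t) T = algebraMap ℝ (Mat d) t := cfc_const t T hT.1
  have hid : cfc (id : ℝ → ℝ) T = T := cfc_id ℝ T hT.1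
  have : cfc (fun x : ℝ => t - x) T = t • (1 : Mat d) - T := by
    calc cfc (fun x : ℝ => t - x) T
        = cfc (fun _ : ℝ => t) T - cfc (id : ℝ → ℝ) T := hsub
      _ = t • (1 : Mat d) - T := by rw [hc, hid, Algebra.algebraMap_eq_smul_one]
  rwa [this] at hpsd

lemma trace_re_nonneg {T : Mat d} (hT : T.PosSemidef) : 0 ≤ (Matrix.trace T).re := by
  rw [trace_eq_sum_eig hT.1, Complex.ofReal_re]
  exact Finset.sum_nonneg fun i _ => hT.eigenvalues_nonneg i

lemma trace_cycle_eq {W C : Mat d} (hW : W.PosDef) (hC : C.PosDef) (q : ℝ) :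
    Matrix.trace (mpow W q * mpow C (-q))
      = Matrix.trace (mpow C (-(q/2)) * mpow W q * mpow C (-(q/2))) := by
  rw [Matrix.trace_mul_cycle, mpow_mul hC,
    show (-(q/2) : ℝ) + -(q/2) = -q by ring, Matrix.trace_mul_comm]

lemma T_posSemidef {W C : Mat d} (hW : W.PosDef) (hC : C.PosDef) (q : ℝ) :
    (mpow C (-(q/2)) * mpow W q * mpow C (-(q/2))).PosSemidef := by
  have h := (mpow_posDef hW q).posSemidef.conjTranspose_mul_mul_same (mpow C (-(q/2)))
  rwa [(mpow_isHermitian C (-(q/2))).eq] at h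

lemma trace_nonneg' {W C : Mat d} (hW : W.PosDef) (hC : C.PosDef) (q : ℝ) :
    0 ≤ (Matrix.trace (mpow W q * mpow C (-q))).re := by
  rw [trace_cycle_eq hW hC q]
  exact trace_re_nonneg (T_posSemidef hW hC q)

set_option maxHeartbeats 1000000 in
lemma key {W C : Mat d} (hW : W.PosDef) (hC : C.PosDef) {q : ℝ} (hq : 1 ≤ q)
    (h : ¬ (C - W).PosSemidef) : 1 ≤ (Matrix.trace (mpow W q * mpow C (-q))).re := by
  by_contra hlt
  push_neg at hlt
  apply h
  have hq0 : (0:ℝ) < q := lt_of_lt_of_le one_pos hq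
  set T : Mat d := mpow C (-(q/2)) * mpow W q * mpow C (-(q/2)) with hTdef
  set t : ℝ := (Matrix.trace T).re with htdef
  have htt : (Matrix.trace (mpow W q * mpow C (-q))).re = t := by
    rw [htdef, trace_cycle_eq hW hC q]
  have ht1 : t ≤ 1 := by rw [← htt]; exact hlt.le
  have ht0 : 0 ≤ t := by rw [← htt]; exact trace_nonneg' hW hC q
  have h1 : (t • (1 : Mat d) - T).PosSemidef := le_trace_smul_one (T_posSemidef hW hC q)
  -- conjugate by P := mpow C (q/2)
  have hPS : mpow C (q/2) * mpow C (-(q/2)) = 1 := by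
    rw [mpow_mul hC, show (q/2 : ℝ) + -(q/2) = 0 by ring, mpow_zero hC.1]
  have hPP : mpow C (q/2) * mpow C (q/2) = mpow C q := by
    rw [mpow_mul hC]; norm_num
  have hPTP : mpow C (q/2) * T * mpow C (q/2) = mpow W q := by
    rw [hTdef]
    have e : mpow C (q/2) * (mpow C (-(q/2)) * mpow W q * mpow C (-(q/2))) * mpow C (q/2)
        = (mpow C (q/2) * mpow C (-(q/2))) * mpow W q * (mpow C (-(q/2)) * mpow C (q/2)) := by
      simp only [Matrix.mul_assoc]
    rw [e, hPS, show mpow C (-(q/2)) * mpow C (q/2) = 1 by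
        rw [mpow_mul hC, show (-(q/2) : ℝ) + q/2 = 0 by ring, mpow_zero hC.1],
      Matrix.one_mul, Matrix.mul_one]
  have hconj := h1.conjTranspose_mul_mul_same (mpow C (q/2))
  rw [(mpow_isHermitian C (q/2)).eq] at hconj
  have hexp : mpow C (q/2) * (t • (1 : Mat d) - T) * mpow C (q/2)
      = t • mpow C q - mpow W q := by
    rw [Matrix.mul_sub, Matrix.sub_mul, hPTP]
    congr 1
    rw [mul_smul_comm, smul_mul_assoc, Matrix.mul_one, hPP]
  rw [hexp] at hconj
  -- add (1 - t) • mpow C q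
  have hadd := hconj.add (psd_smul (mpow_posDef hC q).posSemidef
    (show (0:ℝ) ≤ 1 - t by linarith))
  have hcomb : t • mpow C q - mpow W q + (1 - t) • mpow C q
      = mpow C q - mpow W q := by
    have : t • mpow C q + (1 - t) • mpow C q = mpow C q := by
      rw [← add_smul]
      norm_num
    calc t • mpow C q - mpow W q + (1 - t) • mpow C q
        = (t • mpow C q + (1 - t) • mpow C q) - mpow W q := by abel
      _ = mpow C q - mpow W q := by rw [this]
  rw [hcomb] at hadd
  -- Löwner–Heinz with exponent q⁻¹
  have hlh := lh (mpow_posDef hW q) (mpow_posDef hC q) hadd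
    (r := q⁻¹) (inv_pos.mpr hq0) (inv_le_one_of_one_le₀ hq)
  rwa [mpow_mpow hW, mpow_mpow hC, mul_inv_cancel₀ hq0.ne', mpow_one hW, mpow_one hC] at hlh

end LH


namespace LH
open Matrix

lemma trace_mul_re_sum {d : ℕ} (M K : Mat d) :
    (Matrix.trace (M * K)).re = ∑ i, ∑ j, (M i j * K j i).re := by
  rw [Matrix.trace]
  rw [show (Matrix.diag (M * K)) = fun i => ∑ j, M i j * K j i from rfl]
  rw [Complex.re_sum]
  exact Finset.sum_congr rfl fun i _ => by rw [Complex.re_sum]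

lemma half {d : ℕ} {Ω : Type*} [MeasurableSpace Ω] (μ : Measure Ω) [IsProbabilityMeasure μ]
    (V W : Ω → Mat d) (hV : ∀ᵐ ω ∂μ, (V ω).PosDef) (hW : ∀ᵐ ω ∂μ, (W ω).PosDef)
    (hVW : ∀ᵐ ω ∂μ, (W ω - V ω).PosSemidef)
    (C : Mat d) (hC : C.PosDef) (q : ℝ) (hq : 1 ≤ q)
    (hint : ∀ i j, Integrable (fun ω => mpow (W ω) q i j) μ) :
    (μ {ω | ¬ (C - V ω).PosSemidef}).toReal ≤
      (Matrix.trace (Emat μ (fun ω => mpow (W ω) q) * mpow C (-q))).re := by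
  set K : Mat d := mpow C (-q) with hK
  set g : Ω → ℝ := fun ω => (Matrix.trace (mpow (W ω) q * K)).re with hg
  have hgeq : g = fun ω => ∑ i, ∑ j, ((mpow (W ω) q) i j * K j i).re := by
    funext ω
    rw [hg]
    exact trace_mul_re_sum _ _
  have hgint : Integrable g μ := by
    rw [hgeq]
    exact integrable_finset_sum _ fun i _ => integrable_finset_sum _ fun j _ =>
      ((hint i j).mul_const _).re
  have hnn : 0 ≤ᵐ[μ] g := by
    filter_upwards [hW] with ω hω
    exact trace_nonneg' hω hC q
  have hsub : {ω | ¬ (C - V ω).PosSemidef} ≤ᵐ[μ] {ω | (1:ℝ) ≤ g ω} := by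
    filter_upwards [hW, hVW] with ω h2 h3 hmem
    have hne : ¬ (C - W ω).PosSemidef := by
      intro hcw
      apply hmem
      have hsum := hcw.add h3
      rwa [sub_add_sub_cancel] at hsum
    exact key h2 hC hq hne
  have hμ : μ {ω | ¬ (C - V ω).PosSemidef} ≤ μ {ω | (1:ℝ) ≤ g ω} :=
    measure_mono_ae hsub
  have hmark := mul_meas_ge_le_integral_of_nonneg hnn hgint 1
  rw [one_mul] at hmark
  have h1 : (μ {ω | ¬ (C - V ω).PosSemidef}).toReal ≤ (μ {ω | (1:ℝ) ≤ g ω}).toReal :=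
    ENNReal.toReal_mono (measure_ne_top μ _) hμ
  have h2 : ∫ ω, g ω ∂μ = (Matrix.trace (Emat μ (fun ω => mpow (W ω) q) * K)).re := by
    rw [trace_mul_re_sum]
    have hEij : ∀ i j, (Emat μ (fun ω => mpow (W ω) q)) i j * K j i
        = ∫ ω, (mpow (W ω) q) i j * K j i ∂μ := by
      intro i j
      rw [show (Emat μ (fun ω => mpow (W ω) q)) i j = ∫ ω, (mpow (W ω) q) i j ∂μ from rfl]
      exact (integral_mul_const (K j i) _).symm
    calc ∫ ω, g ω ∂μ
        = ∫ ω, ∑ i, ∑ j, ((mpow (W ω) q) i j * K j i).re ∂μ := by rw [hgeq]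
      _ = ∑ i, ∑ j, ∫ ω, ((mpow (W ω) q) i j * K j i).re ∂μ := by
          rw [integral_finset_sum]
          · refine Finset.sum_congr rfl fun i _ => ?_
            rw [integral_finset_sum]
            intro j _
            exact ((hint i j).mul_const _).re
          · intro i _
            apply integrable_finset_sum
            intro j _
            exact ((hint i j).mul_const _).re
      _ = ∑ i, ∑ j, ((Emat μ (fun ω => mpow (W ω) q)) i j * K j i).re := by
          refine Finset.sum_congr rfl fun i _ => Finset.sum_congr rfl fun j _ => ?_
          rw [hEij i j]
          have hfint : Integrable (fun ω => (mpow (W ω) q) i j * K j i) μ :=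
            (hint i j).mul_const _
          have := integral_re hfint
          simpa using this
  linarith [h1.trans hmark, le_of_eq h2]
end LH

/-- Lemma 3.6: if `X ⪯ Y ⪯ Z` a.s. are random PD matrices, `C` is deterministic
PD and `q ≥ 1`, then `ℙ(Y ⋠ C) ≤ Tr(𝔼[Z^q]·C^{-q})` and
`ℙ(X ⋠ C) ≤ Tr(𝔼[Y^q]·C^{-q})`. -/
theorem tail_bounds_of_loewner_sandwich {d : ℕ} (hd : 1 ≤ d)
    {Ω : Type*} [MeasurableSpace Ω] (μ : Measure Ω) [IsProbabilityMeasure μ]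
    (X Y Z : Ω → Mat d)
    (hX : ∀ᵐ ω ∂μ, (X ω).PosDef) (hY : ∀ᵐ ω ∂μ, (Y ω).PosDef)
    (hZ : ∀ᵐ ω ∂μ, (Z ω).PosDef)
    (hXY : ∀ᵐ ω ∂μ, (Y ω - X ω).PosSemidef)
    (hYZ : ∀ᵐ ω ∂μ, (Z ω - Y ω).PosSemidef)
    (C : Mat d) (hC : C.PosDef) (q : ℝ) (hq : 1 ≤ q)
    (hintY : ∀ i j, Integrable (fun ω => mpow (Y ω) q i j) μ)
    (hintZ : ∀ i j, Integrable (fun ω => mpow (Z ω) q i j) μ) :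
    (μ {ω | ¬ (C - Y ω).PosSemidef}).toReal ≤
        (Matrix.trace (Emat μ (fun ω => mpow (Z ω) q) * mpow C (-q))).re ∧
      (μ {ω | ¬ (C - X ω).PosSemidef}).toReal ≤
        (Matrix.trace (Emat μ (fun ω => mpow (Y ω) q) * mpow C (-q))).re := by
  constructor
  · exact LH.half μ Y Z hY hZ hYZ C hC q hq hintZ
  · exact LH.half μ X Y hX hY hXY C hC q hq hintY
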